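/- For every real C ≥ 1 there exists a real K ≥ 1 with the following property. For all real numbers γ ∈ (0,1], δ ∈ (0,1), L ≥ 1, h ≥ 2, and N ≥ 3 satisfying h ≥ (log N)³, there exist positive integers m and q with m ≥ 2·log N such that: (i) m·q ≥ 2C·log(1/δ); (ii) m·q ≥ 4C²·L·m²·γ^{−1/2}·h; (iii) m·q ≥ 4C²·L·q·γ^{−1/4}·√(h/m); and (iv) C·L·(m²·γ^{−1/2}·h + q·γ^{−1/4}·√(h/m)) ≤ log(1/δ) + K·γ^{−5/6}·h^{5/3}·L^{7/3}. -/

import Mathlib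

open Real

private lemma rpow_pow_aux {x : ℝ} (hx : 0 ≤ x) (a b : ℝ) (n : ℕ) (hab : a * n = b) :
    x ^ b = (x ^ a) ^ n := by
  rw [← hab, Real.rpow_mul hx, Real.rpow_natCast]

private lemma one_le_mul3 {a b c : ℝ} (ha : 1 ≤ a) (hb : 1 ≤ b) (hc : 1 ≤ c) :
    1 ≤ a * b * c := by
  have h1 : (1:ℝ) * 1 ≤ a * b := mul_le_mul ha hb zero_le_one (le_trans zero_le_one ha)
  have h2 : (a * b) * 1 ≤ (a * b) * c :=
    mul_le_mul_of_nonneg_left hc (by linarith)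
  linarith

set_option maxHeartbeats 1600000 in
/-- Parameter balancing for the implementable AGSP: for every `C ≥ 1` there is `K ≥ 1` such
that for all `γ ∈ (0,1]`, `δ ∈ (0,1)`, `L ≥ 1`, `h ≥ 2`, `N ≥ 3` with `h ≥ (log N)³`,
there are positive integers `m, q` with `m ≥ 2 log N` satisfying
(i) `mq ≥ 2C log(1/δ)`,
(ii) `mq ≥ 4C²L·m²·γ^{-1/2}·h`,
(iii) `mq ≥ 4C²L·q·γ^{-1/4}·√(h/m)`, and
(iv) `CL(m²γ^{-1/2}h + qγ^{-1/4}√(h/m)) ≤ log(1/δ) + K·γ^{-5/6}·h^{5/3}·L^{7/3}`. -/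
theorem agsp_parameter_balancing :
    ∀ C : ℝ, 1 ≤ C → ∃ K : ℝ, 1 ≤ K ∧
      ∀ γ δ L h N : ℝ,
        0 < γ → γ ≤ 1 → 0 < δ → δ < 1 → 1 ≤ L → 2 ≤ h → 3 ≤ N →
        (Real.log N) ^ 3 ≤ h →
        ∃ m q : ℕ, 0 < m ∧ 0 < q ∧ 2 * Real.log N ≤ (m : ℝ) ∧
          (2 * C * Real.log (1 / δ) ≤ (m : ℝ) * q) ∧
          (4 * C ^ 2 * L * (m : ℝ) ^ 2 * γ ^ (-(1 / 2 : ℝ)) * h ≤ (m : ℝ) * q) ∧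
          (4 * C ^ 2 * L * (q : ℝ) * γ ^ (-(1 / 4 : ℝ)) * Real.sqrt (h / m) ≤ (m : ℝ) * q) ∧
          C * L * ((m : ℝ) ^ 2 * γ ^ (-(1 / 2 : ℝ)) * h +
              (q : ℝ) * γ ^ (-(1 / 4 : ℝ)) * Real.sqrt (h / m)) ≤
            Real.log (1 / δ) + K * γ ^ (-(5 / 6 : ℝ)) * h ^ (5 / 3 : ℝ) * L ^ (7 / 3 : ℝ) := by
  intro C hC
  have hCpos : (0:ℝ) < C := by linarith
  refine ⟨100 * (4 * C ^ 2) ^ ((7:ℝ)/3), ?_, ?_⟩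
  · have h1 : (1:ℝ) ≤ (4 * C ^ 2) ^ ((7:ℝ)/3) :=
      Real.one_le_rpow (by nlinarith) (by norm_num)
    linarith
  intro γ δ L h N hγ hγ1 hδ hδ1 hL hh hN hlogN
  have hh0 : (0:ℝ) ≤ h := by linarith
  have hCL1 : (1:ℝ) ≤ 4 * C ^ 2 * L := by nlinarith
  set u := γ ^ (-(1/12 : ℝ)) with hu
  set v := h ^ ((1/6 : ℝ)) with hv
  set w := (4 * C ^ 2 * L) ^ ((1/3 : ℝ)) with hw
  have hu1 : 1 ≤ u := Real.one_le_rpow_of_pos_of_le_one_of_nonpos hγ hγ1 (by norm_num)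
  have hv1 : 1 ≤ v := Real.one_le_rpow (by linarith) (by norm_num)
  have hw1 : 1 ≤ w := Real.one_le_rpow hCL1 (by norm_num)
  have hu0 : (0:ℝ) ≤ u := by linarith
  have hv0 : (0:ℝ) ≤ v := by linarith
  have hw0 : (0:ℝ) ≤ w := by linarith
  have e1 : γ ^ (-(1/2 : ℝ)) = u ^ 6 := rpow_pow_aux hγ.le _ _ 6 (by norm_num)
  have e2 : γ ^ (-(1/4 : ℝ)) = u ^ 3 := rpow_pow_aux hγ.le _ _ 3 (by norm_num)
  have e3 : γ ^ (-(5/6 : ℝ)) = u ^ 10 := rpow_pow_aux hγ.le _ _ 10 (by norm_num)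
  have e4 : h = v ^ 6 := by
    have := rpow_pow_aux hh0 (1/6) 1 6 (by norm_num)
    rwa [Real.rpow_one] at this
  have e5 : Real.sqrt h = v ^ 3 := by
    rw [Real.sqrt_eq_rpow]
    exact rpow_pow_aux hh0 _ _ 3 (by norm_num)
  have e6 : h ^ ((5:ℝ)/3) = v ^ 10 := rpow_pow_aux hh0 _ _ 10 (by norm_num)
  have e8 : 4 * C ^ 2 * L = w ^ 3 := by
    have := rpow_pow_aux (le_trans zero_le_one hCL1) (1/3) 1 3 (by norm_num)
    rwa [Real.rpow_one] at this
  have e9 : (4 * C ^ 2) ^ ((7:ℝ)/3) * L ^ ((7:ℝ)/3) = w ^ 7 := by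
    rw [hw, ← Real.mul_rpow (by nlinarith) (by linarith)]
    exact (rpow_pow_aux (le_trans zero_le_one hCL1) (1/3) ((7:ℝ)/3) 7 (by norm_num))
  clear_value u v w
  -- choice of m
  have hw2 : (1:ℝ) ≤ w ^ 2 := one_le_pow₀ hw1
  have hu2 : (1:ℝ) ≤ u ^ 2 := one_le_pow₀ hu1
  have hv2 : (1:ℝ) ≤ v ^ 2 := one_le_pow₀ hv1
  have hX1 : (1:ℝ) ≤ w ^ 2 * u ^ 2 * v ^ 2 := one_le_mul3 hw2 hu2 hv2
  set B := 2 * (w ^ 2 * u ^ 2 * v ^ 2) with hB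
  have hB1 : 1 ≤ B := by rw [hB]; linarith
  have hB0 : (0:ℝ) ≤ B := by linarith
  set m : ℕ := ⌈B⌉₊ with hmdef
  have hmB : B ≤ (m:ℝ) := Nat.le_ceil B
  have hm1 : 1 ≤ (m:ℝ) := le_trans hB1 hmB
  have hmpos' : (0:ℝ) < m := by linarith
  have hmpos : 0 < m := by exact_mod_cast hmpos'
  have hm0 : (m:ℝ) ≠ 0 := ne_of_gt hmpos'
  have hm2B : (m:ℝ) ≤ 2 * B := by
    have h2 : (m:ℝ) < B + 1 := Nat.ceil_lt_add_one hB0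
    linarith
  clear_value B m
  have hlogδ : 0 < Real.log (1/δ) := Real.log_pos (by rw [lt_div_iff₀ hδ]; linarith)
  -- choice of q
  set A := w ^ 3 * u ^ 6 * v ^ 6 with hA
  have hw3 : (1:ℝ) ≤ w ^ 3 := one_le_pow₀ hw1
  have hu6 : (1:ℝ) ≤ u ^ 6 := one_le_pow₀ hu1
  have hv6 : (1:ℝ) ≤ v ^ 6 := one_le_pow₀ hv1
  have hA1 : 1 ≤ A := one_le_mul3 hw3 hu6 hv6
  clear_value A
  set Q := A * m + 2 * C * Real.log (1/δ) / m with hQ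
  have hQ0 : 0 < Q := by
    have h1 : 0 < A * m := mul_pos (by linarith) hmpos'
    have h2 : 0 < 2 * C * Real.log (1/δ) / m :=
      div_pos (mul_pos (by linarith) hlogδ) hmpos'
    rw [hQ]; linarith
  set q : ℕ := ⌈Q⌉₊ with hqdef
  have hqQ : Q ≤ (q:ℝ) := Nat.le_ceil Q
  have hqQ2 : (q:ℝ) ≤ Q + 1 := le_of_lt (Nat.ceil_lt_add_one hQ0.le)
  have hqpos : 0 < q := Nat.ceil_pos.mpr hQ0
  have hq0 : (0:ℝ) ≤ (q:ℝ) := Nat.cast_nonneg q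
  clear_value Q q
  -- sqrt facts
  have hmsq : Real.sqrt (h / (m:ℝ)) = v ^ 3 / Real.sqrt (m:ℝ) := by
    rw [Real.sqrt_div hh0, e5]
  set s := v ^ 3 / Real.sqrt (m:ℝ) with hs
  clear_value s
  have hwuv0 : (0:ℝ) ≤ w * u * v := mul_nonneg (mul_nonneg hw0 hu0) hv0
  have hsm : w * u * v ≤ Real.sqrt (m:ℝ) := by
    rw [Real.le_sqrt hwuv0 (by positivity)]
    calc (w * u * v) ^ 2 = w ^ 2 * u ^ 2 * v ^ 2 := by ring
      _ ≤ B := by rw [hB]; linarith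
      _ ≤ (m:ℝ) := hmB
  have hsm0 : 0 < Real.sqrt (m:ℝ) := Real.sqrt_pos.mpr hmpos'
  have key : w ^ 3 * u ^ 3 * v ^ 3 ≤ (m:ℝ) * Real.sqrt (m:ℝ) := by
    calc w ^ 3 * u ^ 3 * v ^ 3 = (w ^ 2 * u ^ 2 * v ^ 2) * (w * u * v) := by ring
      _ ≤ (m:ℝ) * Real.sqrt (m:ℝ) := by
          apply mul_le_mul (le_trans (by rw [hB] at hmB; linarith) hmB) hsm hwuv0 (by positivity)
  have hk : w ^ 3 * u ^ 3 * v ^ 3 / Real.sqrt (m:ℝ) ≤ (m:ℝ) := (div_le_iff₀ hsm0).mpr key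
  have hk2 : w ^ 3 * (u ^ 3 * s) ≤ (m:ℝ) := by
    calc w ^ 3 * (u ^ 3 * s) = w ^ 3 * u ^ 3 * v ^ 3 / Real.sqrt (m:ℝ) := by rw [hs]; ring
      _ ≤ (m:ℝ) := hk
  -- arithmetic facts about Q
  have hmQeq : (m:ℝ) * Q = A * (m:ℝ) ^ 2 + 2 * C * Real.log (1/δ) := by
    rw [hQ]; field_simp
  have hAmq : A * (m:ℝ) ≤ (q:ℝ) := by
    have h2 : 0 ≤ 2 * C * Real.log (1/δ) / m :=
      le_of_lt (div_pos (mul_pos (by linarith) hlogδ) hmpos')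
    have h3 : A * (m:ℝ) ≤ Q := by rw [hQ]; linarith
    linarith
  have hqm : (q:ℝ) * (m:ℝ) ≤ A * (m:ℝ) ^ 2 + 2 * C * Real.log (1/δ) + m := by
    have h1 : (q:ℝ) * (m:ℝ) ≤ (Q + 1) * m :=
      mul_le_mul_of_nonneg_right hqQ2 hmpos'.le
    have h2 : (Q + 1) * (m:ℝ) = (m:ℝ) * Q + m := by ring
    linarith [hmQeq]
  refine ⟨m, q, hmpos, hqpos, ?_, ?_, ?_, ?_, ?_⟩
  · -- 2 log N ≤ m
    have hlogNv : Real.log N ≤ v ^ 2 := by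
      by_contra hcon
      push_neg at hcon
      have hlt : (v ^ 2) ^ 3 < (Real.log N) ^ 3 :=
        pow_lt_pow_left₀ hcon (by positivity) (by norm_num)
      have hv6e : (v ^ 2) ^ 3 = v ^ 6 := by ring
      linarith [e4, hlogN]
    have hBv : 2 * v ^ 2 ≤ B := by
      rw [hB]
      have h12 : (1:ℝ) * 1 ≤ w ^ 2 * u ^ 2 := mul_le_mul hw2 hu2 zero_le_one (by linarith)
      have h13 : 1 * v ^ 2 ≤ (w ^ 2 * u ^ 2) * v ^ 2 :=
        mul_le_mul_of_nonneg_right (by linarith) (by positivity)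
      have h14 : (w ^ 2 * u ^ 2) * v ^ 2 = w ^ 2 * u ^ 2 * v ^ 2 := by ring
      linarith
    linarith
  · -- (i)
    have h1 : (m:ℝ) * Q ≤ (m:ℝ) * q := mul_le_mul_of_nonneg_left hqQ hmpos'.le
    have h2 : 0 ≤ A * (m:ℝ) ^ 2 := mul_nonneg (by linarith) (sq_nonneg _)
    linarith [hmQeq]
  · -- (ii)
    rw [e1, e8, e4]
    calc w ^ 3 * (m:ℝ) ^ 2 * u ^ 6 * v ^ 6 = (m:ℝ) * (A * (m:ℝ)) := by rw [hA]; ring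
      _ ≤ (m:ℝ) * q := mul_le_mul_of_nonneg_left hAmq hmpos'.le
  · -- (iii)
    rw [e2, e8, hmsq]
    calc w ^ 3 * (q:ℝ) * u ^ 3 * s = (q:ℝ) * (w ^ 3 * (u ^ 3 * s)) := by ring
      _ ≤ (q:ℝ) * (m:ℝ) := mul_le_mul_of_nonneg_left hk2 hq0
      _ = (m:ℝ) * q := by ring
  · -- (iv)
    rw [e1, e2, e3, hmsq, e6, e4]
    have hCLw : 4 * C * (C * L) = w ^ 3 := by rw [← e8]; ring
    have step1 : 4 * C * (C * L * ((m:ℝ) ^ 2 * u ^ 6 * v ^ 6 + (q:ℝ) * u ^ 3 * s)) =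
        w ^ 3 * (m:ℝ) ^ 2 * u ^ 6 * v ^ 6 + (q:ℝ) * (w ^ 3 * (u ^ 3 * s)) := by
      rw [← hCLw]; ring
    have step2 : (q:ℝ) * (w ^ 3 * (u ^ 3 * s)) ≤ (q:ℝ) * m :=
      mul_le_mul_of_nonneg_left hk2 hq0
    have step3 : w ^ 3 * (m:ℝ) ^ 2 * u ^ 6 * v ^ 6 = A * (m:ℝ) ^ 2 := by rw [hA]; ring
    have main : 4 * C * (C * L * ((m:ℝ) ^ 2 * u ^ 6 * v ^ 6 + (q:ℝ) * u ^ 3 * s)) ≤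
        2 * A * (m:ℝ) ^ 2 + 2 * C * Real.log (1/δ) + m := by
      rw [step1, step3]
      linarith [step2, hqm]
    -- size bounds
    have hP : (m:ℝ) ≤ 4 * (w ^ 2 * u ^ 2 * v ^ 2) := by rw [hB] at hm2B; linarith
    have hmsqbd : (m:ℝ) ^ 2 ≤ 16 * (w ^ 2 * u ^ 2 * v ^ 2) ^ 2 := by
      have h1 := mul_le_mul hP hP hmpos'.le
        (by positivity : (0:ℝ) ≤ 4 * (w ^ 2 * u ^ 2 * v ^ 2))
      have h2 : (m:ℝ) * (m:ℝ) = (m:ℝ) ^ 2 := by ring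
      have h3 : 4 * (w ^ 2 * u ^ 2 * v ^ 2) * (4 * (w ^ 2 * u ^ 2 * v ^ 2)) =
          16 * (w ^ 2 * u ^ 2 * v ^ 2) ^ 2 := by ring
      linarith
    have hbig1 : 2 * A * (m:ℝ) ^ 2 ≤ 32 * (w ^ 7 * u ^ 10 * v ^ 10) := by
      have hA0 : (0:ℝ) ≤ w ^ 3 * u ^ 6 * v ^ 6 :=
        mul_nonneg (mul_nonneg (pow_nonneg hw0 3) (pow_nonneg hu0 6)) (pow_nonneg hv0 6)
      have h1 : A * (m:ℝ) ^ 2 ≤ (w ^ 3 * u ^ 6 * v ^ 6) * (16 * (w ^ 2 * u ^ 2 * v ^ 2) ^ 2) := by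
        rw [hA]
        exact mul_le_mul_of_nonneg_left hmsqbd hA0
      have h2 : (w ^ 3 * u ^ 6 * v ^ 6) * (16 * (w ^ 2 * u ^ 2 * v ^ 2) ^ 2) =
          16 * (w ^ 7 * u ^ 10 * v ^ 10) := by ring
      linarith
    have h15 : (1:ℝ) ≤ w ^ 5 * u ^ 8 * v ^ 8 :=
      one_le_mul3 (one_le_pow₀ hw1) (one_le_pow₀ hu1) (one_le_pow₀ hv1)
    have hbig2 : (m:ℝ) ≤ 4 * (w ^ 7 * u ^ 10 * v ^ 10) := by
      have h1 : w ^ 2 * u ^ 2 * v ^ 2 ≤ w ^ 7 * u ^ 10 * v ^ 10 := by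
        calc w ^ 2 * u ^ 2 * v ^ 2 = (w ^ 2 * u ^ 2 * v ^ 2) * 1 := by ring
          _ ≤ (w ^ 2 * u ^ 2 * v ^ 2) * (w ^ 5 * u ^ 8 * v ^ 8) :=
              mul_le_mul_of_nonneg_left h15 (by positivity)
          _ = w ^ 7 * u ^ 10 * v ^ 10 := by ring
      linarith
    have hW1 : (1:ℝ) ≤ w ^ 7 * u ^ 10 * v ^ 10 :=
      one_le_mul3 (one_le_pow₀ hw1) (one_le_pow₀ hu1) (one_le_pow₀ hv1)
    have step4 : 2 * A * (m:ℝ) ^ 2 + (m:ℝ) ≤ 400 * C * (w ^ 7 * u ^ 10 * v ^ 10) := by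
      have hCW : w ^ 7 * u ^ 10 * v ^ 10 ≤ C * (w ^ 7 * u ^ 10 * v ^ 10) :=
        le_mul_of_one_le_left (by linarith) hC
      linarith
    have eRHS : 100 * (4 * C ^ 2) ^ ((7:ℝ)/3) * u ^ 10 * v ^ 10 * L ^ ((7:ℝ)/3) =
        100 * (w ^ 7 * u ^ 10 * v ^ 10) := by
      rw [← e9]; ring
    have hfin : 4 * C * (C * L * ((m:ℝ) ^ 2 * u ^ 6 * v ^ 6 + (q:ℝ) * u ^ 3 * s)) ≤
        4 * C * (Real.log (1/δ) + 100 * (w ^ 7 * u ^ 10 * v ^ 10)) := by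
      have hClog : 0 ≤ C * Real.log (1/δ) := le_of_lt (mul_pos hCpos hlogδ)
      linarith [main, step4, hClog]
    have hfin2 := (mul_le_mul_iff_right₀ (by linarith : (0:ℝ) < 4 * C)).mp hfin
    linarith [eRHS, hfin2]
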